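/- Let X be a random variable with values in [0,1] and let A ⊆ [0,1] be measurable with P(P(X ∈ A | Y) ∈ {0,1}) < 1 for some random variable Y. Define U conditionally on (X,Y=y) as Unif[0, P(X∈A|Y=y)] if X ∈ A and Unif[P(X∈A|Y=y), 1] if X ∉ A. Then U ∼ Unif[0,1], U is independent of Y, and U is not independent of X. -/

import Mathlib

open MeasureTheory ProbabilityTheory Set
open scoped ENNReal Classical

lemma aux_scale {c : ℝ} (hc0 : 0 < c) (hc1 : c ≤ 1) {S : Set ℝ} :
    (volume.restrict (Set.Icc (0:ℝ) 1)) {t | c * t ∈ S} =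
      ENNReal.ofReal ((volume (S ∩ Set.Icc 0 c)).toReal / c) := by
  have hv : volume (S ∩ Set.Icc 0 c) ≠ ∞ :=
    (lt_of_le_of_lt (measure_mono Set.inter_subset_right) (by simp [Real.volume_Icc])).ne
  have hset : {t : ℝ | c * t ∈ S} ∩ Set.Icc 0 1 = (c * ·) ⁻¹' (S ∩ Set.Icc 0 c) := by
    ext t
    simp only [Set.mem_inter_iff, Set.mem_setOf_eq, Set.mem_Icc, Set.mem_preimage]
    constructor
    · rintro ⟨h1, h2, h3⟩
      exact ⟨h1, by positivity, by nlinarith⟩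
    · rintro ⟨h1, h2, h3⟩
      refine ⟨h1, nonneg_of_mul_nonneg_right h2 hc0, ?_⟩
      nlinarith
  rw [Measure.restrict_apply' measurableSet_Icc, hset,
    Real.volume_preimage_mul_left (ne_of_gt hc0), div_eq_mul_inv,
    ENNReal.ofReal_mul ENNReal.toReal_nonneg, ENNReal.ofReal_toReal hv,
    abs_of_nonneg (inv_nonneg.2 hc0.le), mul_comm]

lemma aux_affine {c : ℝ} (hc0 : 0 ≤ c) (hc1 : c < 1) {S : Set ℝ} :
    (volume.restrict (Set.Icc (0:ℝ) 1)) {t | c + (1 - c) * t ∈ S} =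
      ENNReal.ofReal ((volume (S ∩ Set.Icc c 1)).toReal / (1 - c)) := by
  have hd : (0:ℝ) < 1 - c := by linarith
  have hv : volume (S ∩ Set.Icc c 1) ≠ ∞ :=
    (lt_of_le_of_lt (measure_mono Set.inter_subset_right) (by simp [Real.volume_Icc])).ne
  have hset : {t : ℝ | c + (1 - c) * t ∈ S} ∩ Set.Icc 0 1
      = ((1 - c) * ·) ⁻¹' ((c + ·) ⁻¹' (S ∩ Set.Icc c 1)) := by
    ext t
    simp only [Set.mem_inter_iff, Set.mem_setOf_eq, Set.mem_Icc, Set.mem_preimage]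
    constructor
    · rintro ⟨h1, h2, h3⟩
      exact ⟨h1, by nlinarith, by nlinarith⟩
    · rintro ⟨h1, h2, h3⟩
      refine ⟨h1, ?_, ?_⟩ <;> nlinarith
  rw [Measure.restrict_apply' measurableSet_Icc, hset,
    Real.volume_preimage_mul_left (ne_of_gt hd), measure_preimage_add,
    div_eq_mul_inv, ENNReal.ofReal_mul ENNReal.toReal_nonneg, ENNReal.ofReal_toReal hv,
    abs_of_nonneg (inv_nonneg.2 hd.le), mul_comm]

noncomputable def FA (S : Set ℝ) (c : ℝ) : ℝ := (volume (S ∩ Set.Icc 0 c)).toReal / c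
noncomputable def FB (S : Set ℝ) (c : ℝ) : ℝ := (volume (S ∩ Set.Icc c 1)).toReal / (1 - c)

lemma vA_fin (S : Set ℝ) (c : ℝ) : volume (S ∩ Set.Icc 0 c) ≠ ∞ :=
  (lt_of_le_of_lt (measure_mono Set.inter_subset_right) (by simp [Real.volume_Icc])).ne

lemma vB_fin (S : Set ℝ) (c : ℝ) : volume (S ∩ Set.Icc c 1) ≠ ∞ :=
  (lt_of_le_of_lt (measure_mono Set.inter_subset_right) (by simp [Real.volume_Icc])).ne

lemma FA_mem (S : Set ℝ) (c : ℝ) : 0 ≤ FA S c ∧ FA S c ≤ 1 := by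
  rcases le_or_gt c 0 with h | h
  · rcases eq_or_lt_of_le h with rfl | h'
    · constructor <;> simp [FA]
    · have : (volume (S ∩ Set.Icc 0 c)).toReal = 0 := by
        rw [Set.Icc_eq_empty (by linarith), Set.inter_empty]; simp
      constructor <;> simp [FA, this]
  · have hle : (volume (S ∩ Set.Icc 0 c)).toReal ≤ c := by
      have := measure_mono (μ := volume) (Set.inter_subset_right (s := S) (t := Set.Icc (0:ℝ) c))
      rw [Real.volume_Icc] at this
      calc (volume (S ∩ Set.Icc 0 c)).toReal ≤ (ENNReal.ofReal (c - 0)).toReal :=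
            ENNReal.toReal_mono (by simp) this
        _ = c := by rw [ENNReal.toReal_ofReal (by linarith)]; ring
    constructor
    · exact div_nonneg ENNReal.toReal_nonneg h.le
    · rw [FA, div_le_one h]; exact hle

lemma FB_mem (S : Set ℝ) (c : ℝ) : 0 ≤ FB S c ∧ FB S c ≤ 1 := by
  rcases le_or_gt 1 c with h | h
  · rcases eq_or_lt_of_le h with rfl | h'
    · constructor <;> simp [FB]
    · have : (volume (S ∩ Set.Icc c 1)).toReal = 0 := by
        rw [Set.Icc_eq_empty (by linarith), Set.inter_empty]; simp
      constructor <;> simp only [FB, this] <;> rw [zero_div] <;> norm_num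
  · have hd : (0:ℝ) < 1 - c := by linarith
    have hle : (volume (S ∩ Set.Icc c 1)).toReal ≤ 1 - c := by
      have := measure_mono (μ := volume) (Set.inter_subset_right (s := S) (t := Set.Icc c (1:ℝ)))
      rw [Real.volume_Icc] at this
      calc (volume (S ∩ Set.Icc c 1)).toReal ≤ (ENNReal.ofReal (1 - c)).toReal :=
            ENNReal.toReal_mono (by simp) this
        _ = 1 - c := ENNReal.toReal_ofReal (by linarith)
    constructor
    · exact div_nonneg ENNReal.toReal_nonneg hd.le
    · rw [FB, div_le_one hd]; exact hle

lemma FA_meas (S : Set ℝ) : Measurable (FA S) := by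
  have h1 : Monotone (fun c => (volume (S ∩ Set.Icc 0 c)).toReal) := by
    intro a b hab
    exact ENNReal.toReal_mono (vA_fin S b)
      (measure_mono (Set.inter_subset_inter_right _ (Set.Icc_subset_Icc_right hab)))
  exact (h1.measurable).div measurable_id

lemma FB_meas (S : Set ℝ) : Measurable (FB S) := by
  have h1 : Antitone (fun c => (volume (S ∩ Set.Icc c 1)).toReal) := by
    intro a b hab
    exact ENNReal.toReal_mono (vB_fin S a)
      (measure_mono (Set.inter_subset_inter_right _ (Set.Icc_subset_Icc_left hab)))
  exact (h1.measurable).div (measurable_const.sub measurable_id)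

lemma FA_sum {S : Set ℝ} (hS : MeasurableSet S) {c : ℝ} (h0 : 0 ≤ c) (h1 : c ≤ 1) :
    c * FA S c + (1 - c) * FB S c = (volume (S ∩ Set.Icc 0 1)).toReal := by
  have e1 : c * FA S c = (volume (S ∩ Set.Icc 0 c)).toReal := by
    rcases eq_or_lt_of_le h0 with rfl | h
    · simp [FA, Set.Icc_self]
      have : volume (S ∩ ({0}:Set ℝ)) ≤ volume ({0}:Set ℝ) := measure_mono Set.inter_subset_right
      simp at this
      simp [this]
    · rw [FA, mul_div_cancel₀ _ (ne_of_gt h)]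
  have e2 : (1 - c) * FB S c = (volume (S ∩ Set.Icc c 1)).toReal := by
    rcases eq_or_lt_of_le h1 with rfl | h
    · simp [FB, Set.Icc_self]
      have : volume (S ∩ ({1}:Set ℝ)) ≤ volume ({1}:Set ℝ) := measure_mono Set.inter_subset_right
      simp at this
      simp [this]
    · rw [FB, mul_div_cancel₀ _ (by linarith : (1:ℝ) - c ≠ 0)]
  rw [e1, e2]
  have hsing : volume (S ∩ Set.Icc 0 c ∩ (S ∩ Set.Icc c 1)) = 0 := by
    have : S ∩ Set.Icc 0 c ∩ (S ∩ Set.Icc c 1) ⊆ {c} := by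
      rintro x ⟨⟨-, -, hx2⟩, -, hx3, -⟩
      exact le_antisymm hx2 hx3
    exact measure_mono_null this (by simp)
  have hunion : S ∩ Set.Icc 0 c ∪ S ∩ Set.Icc c 1 = S ∩ Set.Icc 0 1 := by
    rw [← Set.inter_union_distrib_left, Set.Icc_union_Icc_eq_Icc h0 h1]
  have hkey := measure_union_add_inter (μ := volume) (S ∩ Set.Icc 0 c)
    (t := S ∩ Set.Icc c 1) (hS.inter measurableSet_Icc)
  rw [hunion, hsing, add_zero] at hkey
  rw [← ENNReal.toReal_add (vA_fin S c) (vB_fin S c), hkey]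

lemma FA_Iic {u c : ℝ} (hu : 0 ≤ u) (hc : 0 ≤ c) : FA (Set.Iic u) c * c = min u c := by
  have hset : Set.Iic u ∩ Set.Icc 0 c = Set.Icc 0 (min u c) := by
    ext x
    simp only [Set.mem_inter_iff, Set.mem_Iic, Set.mem_Icc]
    exact ⟨fun ⟨h1, h2, h3⟩ => ⟨h2, le_min h1 h3⟩,
      fun ⟨h2, h4⟩ => ⟨h4.trans (min_le_left _ _), h2, h4.trans (min_le_right _ _)⟩⟩
  rw [FA, hset, Real.volume_Icc, sub_zero, ENNReal.toReal_ofReal (le_min hu hc)]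
  rcases eq_or_lt_of_le hc with rfl | h
  · simp [min_eq_right hu]
  · rw [div_mul_cancel₀ _ (ne_of_gt h)]

lemma Iic_inter_Icc01 : Set.Iic (2⁻¹:ℝ) ∩ Set.Icc 0 1 = Set.Icc (0:ℝ) 2⁻¹ := by
  ext x
  simp only [Set.mem_inter_iff, Set.mem_Iic, Set.mem_Icc]
  constructor
  · rintro ⟨a, b, c⟩; exact ⟨b, a⟩
  · rintro ⟨b, a⟩; exact ⟨a, b, by linarith⟩
def mYd {Ω : Type} (Y : Ω → ℝ) : MeasurableSpace Ω := MeasurableSpace.comap Y inferInstance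

theorem stmt16 {Ω : Type} [MeasurableSpace Ω] (μ : Measure Ω) [IsProbabilityMeasure μ]
    (X Y : Ω → ℝ) (hX : Measurable X) (hY : Measurable Y)
    (A : Set ℝ) (hA : MeasurableSet A)
    (g : Ω → ℝ)
    (hg : g =ᵐ[μ]
      μ[(X ⁻¹' A).indicator (fun _ => (1 : ℝ)) | MeasurableSpace.comap Y inferInstance])
    (hnd : μ {ω | g ω = 0 ∨ g ω = 1} < 1)
    (U : Ω × ℝ → ℝ)
    (hU : ∀ p : Ω × ℝ,
      U p = if X p.1 ∈ A then g p.1 * p.2 else g p.1 + (1 - g p.1) * p.2) :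
    Measure.map U (μ.prod (volume.restrict (Set.Icc (0:ℝ) 1))) =
        volume.restrict (Set.Icc (0:ℝ) 1) ∧
    IndepFun U (fun p => Y p.1) (μ.prod (volume.restrict (Set.Icc (0:ℝ) 1))) ∧
    ¬ IndepFun U (fun p => X p.1) (μ.prod (volume.restrict (Set.Icc (0:ℝ) 1))) := by
  have hmIcc : (volume.restrict (Set.Icc (0:ℝ) 1)) Set.univ = 1 := by
    rw [Measure.restrict_apply_univ, Real.volume_Icc]; norm_num
  haveI hmprob : IsProbabilityMeasure (volume.restrict (Set.Icc (0:ℝ) 1)) := ⟨hmIcc⟩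
  set m : Measure ℝ := volume.restrict (Set.Icc (0:ℝ) 1) with hm_def
  set ν : Measure (Ω × ℝ) := μ.prod m with hν_def
  have hmY : mYd Y ≤ (inferInstance : MeasurableSpace Ω) := hY.comap_le
  set I : Ω → ℝ := (X ⁻¹' A).indicator (fun _ => (1 : ℝ)) with hI_def
  set G : Ω → ℝ := μ[I | mYd Y] with hG_def
  have hg' : g =ᵐ[μ] G := hg
  have hI_int : Integrable I μ := (integrable_const (1:ℝ)).indicator (hX hA)
  have hGmY : Measurable[mYd Y] G := stronglyMeasurable_condExp.measurable
  have hGm : Measurable G := hGmY.mono hmY le_rfl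
  have hI01 : ∀ ω, 0 ≤ I ω ∧ I ω ≤ 1 := by
    intro ω
    by_cases h : ω ∈ X ⁻¹' A <;> simp [hI_def, h]
  -- a.e. bounds on G
  have h01 : ∀ᵐ ω ∂μ, 0 ≤ G ω ∧ G ω ≤ 1 := by
    have h0 : 0 ≤ᵐ[μ] G := condExp_nonneg (ae_of_all _ fun ω => (hI01 ω).1)
    have h1 : G ≤ᵐ[μ] μ[(fun _ => (1:ℝ)) | mYd Y] :=
      condExp_mono hI_int (integrable_const 1) (ae_of_all _ fun ω => (hI01 ω).2)
    rw [condExp_const hmY] at h1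
    filter_upwards [h0, h1] with ω hω0 hω1
    exact ⟨hω0, hω1⟩
  -- pull-out property
  have pull : ∀ (f : Ω → ℝ), Measurable[mYd Y] f → (∀ ω, ‖f ω‖ ≤ 1) →
      ∀ {s : Set Ω}, MeasurableSet[mYd Y] s →
      ∫ ω in s, f ω * I ω ∂μ = ∫ ω in s, f ω * G ω ∂μ := by
    intro f hf hfb s hs
    have hfsm : StronglyMeasurable[mYd Y] f := hf.stronglyMeasurable
    have hfI : Integrable (f * I) μ :=
      hI_int.bdd_mul (hf.mono hmY le_rfl).aestronglyMeasurable (ae_of_all _ hfb)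
    have hmul : μ[f * I | mYd Y] =ᵐ[μ] f * G :=
      condExp_stronglyMeasurable_mul_of_bound hmY hfsm hI_int 1 (ae_of_all _ hfb)
    calc ∫ ω in s, f ω * I ω ∂μ = ∫ ω in s, (f * I) ω ∂μ := rfl
      _ = ∫ ω in s, (μ[f * I | mYd Y]) ω ∂μ := (setIntegral_condExp hmY hfI hs).symm
      _ = ∫ ω in s, (f * G) ω ∂μ :=
          setIntegral_congr_ae (hmY _ hs) (hmul.mono fun ω hω _ => hω)
      _ = ∫ ω in s, f ω * G ω ∂μ := rfl
  -- integrability of bounded measurable functions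
  have bint : ∀ (f : Ω → ℝ), Measurable f → (∀ ω, ‖f ω‖ ≤ 1) → Integrable f μ := by
    intro f hf hfb
    exact Integrable.mono' (integrable_const 1) hf.aestronglyMeasurable (ae_of_all _ hfb)
  have pull2 : ∀ (f : Ω → ℝ), Measurable[mYd Y] f → (∀ ω, ‖f ω‖ ≤ 1) →
      ∀ {s : Set Ω}, MeasurableSet[mYd Y] s →
      ∫ ω in s, f ω * (1 - I ω) ∂μ = ∫ ω in s, f ω * (1 - G ω) ∂μ := by
    intro f hf hfb s hs
    have hfm : Measurable f := hf.mono hmY le_rfl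
    have hfint : Integrable f μ := bint f hfm hfb
    have hfI : Integrable (fun ω => f ω * I ω) μ :=
      hI_int.bdd_mul hfm.aestronglyMeasurable (ae_of_all _ hfb)
    have hfG : Integrable (fun ω => f ω * G ω) μ :=
      integrable_condExp.bdd_mul hfm.aestronglyMeasurable (ae_of_all _ hfb)
    have e1 : ∀ ω, f ω * (1 - I ω) = f ω - f ω * I ω := fun ω => by ring
    have e2 : ∀ ω, f ω * (1 - G ω) = f ω - f ω * G ω := fun ω => by ring
    simp_rw [e1, e2]
    rw [integral_sub hfint.integrableOn hfI.integrableOn,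
      integral_sub hfint.integrableOn hfG.integrableOn, pull f hf hfb hs]
  -- a.e. positivity of G on X ∈ A
  have hA0 : ∀ᵐ ω ∂μ, ¬(X ω ∈ A ∧ G ω = 0) := by
    have hs0 : MeasurableSet[mYd Y] {ω | G ω = 0} := hGmY (measurableSet_singleton 0)
    have e1 : ∫ ω in {ω | G ω = 0}, I ω ∂μ = ∫ ω in {ω | G ω = 0}, G ω ∂μ :=
      (setIntegral_condExp hmY hI_int hs0).symm
    have e2 : ∫ ω in {ω | G ω = 0}, G ω ∂μ = 0 := by
      apply setIntegral_eq_zero_of_forall_eq_zero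
      intro ω hω; exact hω
    have e3 : ∫ ω in {ω | G ω = 0}, I ω ∂μ = (μ (X ⁻¹' A ∩ {ω | G ω = 0})).toReal := by
      rw [hI_def, integral_indicator_const (1:ℝ) (hX hA),
        measureReal_restrict_apply (hX hA), measureReal_def, smul_eq_mul, mul_one]
    have hnull : μ (X ⁻¹' A ∩ {ω | G ω = 0}) = 0 := by
      have := e3.symm.trans (e1.trans e2)
      rcases (ENNReal.toReal_eq_zero_iff _).mp this with h | h
      · exact h
      · exact absurd h (measure_ne_top μ _)
    rw [ae_iff]
    refine measure_mono_null ?_ hnull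
    intro ω hω
    simp only [Set.mem_setOf_eq, not_not] at hω
    exact ⟨hω.1, hω.2⟩
  -- a.e. G < 1 on X ∉ A
  have hB1 : ∀ᵐ ω ∂μ, ¬(X ω ∉ A ∧ G ω = 1) := by
    have hs1 : MeasurableSet[mYd Y] {ω | G ω = 1} := hGmY (measurableSet_singleton 1)
    have e1 : ∫ ω in {ω | G ω = 1}, (1 - I ω) ∂μ = ∫ ω in {ω | G ω = 1}, (1 - G ω) ∂μ := by
      have := pull2 (fun _ => (1:ℝ)) measurable_const (fun ω => by norm_num) hs1
      simpa using this
    have e2 : ∫ ω in {ω | G ω = 1}, (1 - G ω) ∂μ = 0 := by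
      apply setIntegral_eq_zero_of_forall_eq_zero
      intro ω hω; simp only [Set.mem_setOf_eq] at hω; rw [hω]; ring
    have e3 : ∫ ω in {ω | G ω = 1}, (1 - I ω) ∂μ
        = (μ ((X ⁻¹' A)ᶜ ∩ {ω | G ω = 1})).toReal := by
      have : ∀ ω, 1 - I ω = ((X ⁻¹' A)ᶜ).indicator (fun _ => (1:ℝ)) ω := by
        intro ω; by_cases h : X ω ∈ A <;> simp [hI_def, h]
      simp_rw [this]
      rw [integral_indicator_const (1:ℝ) (hX hA).compl,
        measureReal_restrict_apply (hX hA).compl, measureReal_def, smul_eq_mul, mul_one]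
    have hnull : μ ((X ⁻¹' A)ᶜ ∩ {ω | G ω = 1}) = 0 := by
      have := e3.symm.trans (e1.trans e2)
      rcases (ENNReal.toReal_eq_zero_iff _).mp this with h | h
      · exact h
      · exact absurd h (measure_ne_top μ _)
    rw [ae_iff]
    refine measure_mono_null ?_ hnull
    intro ω hω
    simp only [Set.mem_setOf_eq, not_not] at hω
    exact ⟨hω.1, hω.2⟩
  -- the measurable version of U
  set U' : Ω × ℝ → ℝ :=
    fun p => if X p.1 ∈ A then G p.1 * p.2 else G p.1 + (1 - G p.1) * p.2 with hU'_def
  have hU'meas : Measurable U' := by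
    apply Measurable.ite ((hX.comp measurable_fst) hA)
    · exact (hGm.comp measurable_fst).mul measurable_snd
    · exact (hGm.comp measurable_fst).add
        ((measurable_const.sub (hGm.comp measurable_fst)).mul measurable_snd)
  -- r S : the conditional section mass
  -- core section computation
  have core : ∀ {S : Set ℝ}, MeasurableSet S → ∀ᵐ ω ∂μ,
      m (Prod.mk ω ⁻¹' (U' ⁻¹' S))
        = ENNReal.ofReal (FA S (G ω) * I ω + FB S (G ω) * (1 - I ω)) := by
    intro S hS
    filter_upwards [h01, hA0, hB1] with ω h01ω hA0ω hB1ω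
    by_cases hmem : X ω ∈ A
    · have hI1 : I ω = 1 := by simp [hI_def, hmem]
      have hGpos : 0 < G ω := by
        rcases lt_or_eq_of_le h01ω.1 with h | h
        · exact h
        · exact absurd ⟨hmem, h.symm⟩ hA0ω
      have hsec : Prod.mk ω ⁻¹' (U' ⁻¹' S) = {t | G ω * t ∈ S} := by
        ext t; simp [hU'_def, hmem]
      rw [hsec, hm_def, aux_scale hGpos h01ω.2, hI1]
      norm_num [FA]
    · have hI0 : I ω = 0 := by simp [hI_def, hmem]
      have hGlt : G ω < 1 := by
        rcases lt_or_eq_of_le h01ω.2 with h | h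
        · exact h
        · exact absurd ⟨hmem, h⟩ hB1ω
      have hsec : Prod.mk ω ⁻¹' (U' ⁻¹' S) = {t | G ω + (1 - G ω) * t ∈ S} := by
        ext t; simp [hU'_def, hmem]
      rw [hsec, hm_def, aux_affine h01ω.1 hGlt, hI0]
      norm_num [FB]
  -- step 1 : product sections
  have step1 : ∀ {S : Set ℝ}, MeasurableSet S → ∀ {s : Set Ω}, MeasurableSet s →
      ν (U' ⁻¹' S ∩ s ×ˢ Set.univ)
        = ∫⁻ ω in s, ENNReal.ofReal (FA S (G ω) * I ω + FB S (G ω) * (1 - I ω)) ∂μ := by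
    intro S hS s hs
    rw [hν_def, Measure.prod_apply ((hU'meas hS).inter (hs.prod MeasurableSet.univ))]
    have hsec : (fun ω => m (Prod.mk ω ⁻¹' (U' ⁻¹' S ∩ s ×ˢ Set.univ)))
        = s.indicator (fun ω => m (Prod.mk ω ⁻¹' (U' ⁻¹' S))) := by
      funext ω
      by_cases h : ω ∈ s
      · have : Prod.mk ω ⁻¹' (U' ⁻¹' S ∩ s ×ˢ Set.univ) = Prod.mk ω ⁻¹' (U' ⁻¹' S) := by
          ext t; simp [h]
        rw [this, Set.indicator_of_mem h]
      · have : Prod.mk ω ⁻¹' (U' ⁻¹' S ∩ s ×ˢ Set.univ) = ∅ := by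
          ext t; simp [h]
        rw [this, Set.indicator_of_notMem h]
        simp
    rw [hsec, lintegral_indicator hs]
    exact lintegral_congr_ae (ae_restrict_of_ae ((core hS).mono fun ω hω => hω))
  -- boundedness and integrability of the integrand
  have hr_meas : ∀ (S : Set ℝ), Measurable
      (fun ω => FA S (G ω) * I ω + FB S (G ω) * (1 - I ω)) := by
    intro S
    have hIm : Measurable I := measurable_const.indicator (hX hA)
    exact (((FA_meas S).comp hGm).mul hIm).add
      (((FB_meas S).comp hGm).mul (measurable_const.sub hIm))
  have hr_bd : ∀ (S : Set ℝ) (ω : Ω),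
      0 ≤ FA S (G ω) * I ω + FB S (G ω) * (1 - I ω) ∧
        FA S (G ω) * I ω + FB S (G ω) * (1 - I ω) ≤ 1 := by
    intro S ω
    by_cases h : ω ∈ X ⁻¹' A
    · have : I ω = 1 := by simp [hI_def, h]
      rw [this]; simpa using ⟨(FA_mem S (G ω)).1, (FA_mem S (G ω)).2⟩
    · have : I ω = 0 := by simp [hI_def, h]
      rw [this]; simpa using ⟨(FB_mem S (G ω)).1, (FB_mem S (G ω)).2⟩
  have hr_int : ∀ (S : Set ℝ), Integrable
      (fun ω => FA S (G ω) * I ω + FB S (G ω) * (1 - I ω)) μ := by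
    intro S
    refine bint _ (hr_meas S) fun ω => ?_
    rw [Real.norm_eq_abs, abs_le]
    exact ⟨by linarith [(hr_bd S ω).1], (hr_bd S ω).2⟩
  -- step 2 : from lintegral to integral
  have step2 : ∀ (S : Set ℝ), MeasurableSet S → ∀ (s : Set Ω), MeasurableSet s →
      (∫⁻ ω in s, ENNReal.ofReal (FA S (G ω) * I ω + FB S (G ω) * (1 - I ω)) ∂μ)
        = ENNReal.ofReal (∫ ω in s, (FA S (G ω) * I ω + FB S (G ω) * (1 - I ω)) ∂μ) := by
    intro S hS s hs
    exact (ofReal_integral_eq_lintegral_ofReal (hr_int S).integrableOn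
      (ae_of_all _ fun ω => (hr_bd S ω).1)).symm
  -- step 3 : conditional expectation computation for mY-measurable sets
  have step3 : ∀ {S : Set ℝ}, MeasurableSet S → ∀ {s : Set Ω}, MeasurableSet[mYd Y] s →
      ∫ ω in s, (FA S (G ω) * I ω + FB S (G ω) * (1 - I ω)) ∂μ
        = (μ s).toReal * (volume (S ∩ Set.Icc 0 1)).toReal := by
    intro S hS s hs
    have hFAG : Measurable[mYd Y] (fun ω => FA S (G ω)) := (FA_meas S).comp hGmY
    have hFBG : Measurable[mYd Y] (fun ω => FB S (G ω)) := (FB_meas S).comp hGmY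
    have hFAb : ∀ ω, ‖FA S (G ω)‖ ≤ 1 := fun ω => by
      rw [Real.norm_eq_abs, abs_le]
      exact ⟨by linarith [(FA_mem S (G ω)).1], (FA_mem S (G ω)).2⟩
    have hFBb : ∀ ω, ‖FB S (G ω)‖ ≤ 1 := fun ω => by
      rw [Real.norm_eq_abs, abs_le]
      exact ⟨by linarith [(FB_mem S (G ω)).1], (FB_mem S (G ω)).2⟩
    have hIm : Measurable I := measurable_const.indicator (hX hA)
    have hint1 : Integrable (fun ω => FA S (G ω) * I ω) μ :=
      hI_int.bdd_mul (hFAG.mono hmY le_rfl).aestronglyMeasurable (ae_of_all _ hFAb)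
    have hint2 : Integrable (fun ω => FB S (G ω) * (1 - I ω)) μ :=
      ((integrable_const (1:ℝ)).sub hI_int).bdd_mul
        (hFBG.mono hmY le_rfl).aestronglyMeasurable (ae_of_all _ hFBb)
    have hint3 : Integrable (fun ω => FA S (G ω) * G ω) μ :=
      integrable_condExp.bdd_mul (hFAG.mono hmY le_rfl).aestronglyMeasurable
        (ae_of_all _ hFAb)
    have hint4 : Integrable (fun ω => FB S (G ω) * (1 - G ω)) μ :=
      ((integrable_const (1:ℝ)).sub integrable_condExp).bdd_mul
        (hFBG.mono hmY le_rfl).aestronglyMeasurable (ae_of_all _ hFBb)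
    rw [integral_add hint1.integrableOn hint2.integrableOn,
      pull _ hFAG hFAb hs, pull2 _ hFBG hFBb hs,
      ← integral_add hint3.integrableOn hint4.integrableOn]
    have hae : ∀ᵐ ω ∂μ, FA S (G ω) * G ω + FB S (G ω) * (1 - G ω)
        = (volume (S ∩ Set.Icc 0 1)).toReal := by
      filter_upwards [h01] with ω hω
      have := FA_sum hS hω.1 hω.2
      linarith [this]
    rw [setIntegral_congr_ae (hmY _ hs) (hae.mono fun ω hω _ => hω), setIntegral_const,
      smul_eq_mul, measureReal_def]
  -- the master formula
  have vfin : ∀ S : Set ℝ, volume (S ∩ Set.Icc (0:ℝ) 1) ≠ ⊤ :=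
    fun S => (lt_of_le_of_lt (measure_mono Set.inter_subset_right)
      (by simp [Real.volume_Icc])).ne
  have master : ∀ {S : Set ℝ}, MeasurableSet S → ∀ {s : Set Ω}, MeasurableSet[mYd Y] s →
      ν (U' ⁻¹' S ∩ s ×ˢ Set.univ) = volume (S ∩ Set.Icc 0 1) * μ s := by
    intro S hS s hs
    rw [step1 hS (hmY _ hs), step2 S hS s (hmY _ hs), step3 hS hs,
      ENNReal.ofReal_mul ENNReal.toReal_nonneg,
      ENNReal.ofReal_toReal (measure_ne_top μ s), ENNReal.ofReal_toReal (vfin S), mul_comm]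
  -- U and U' agree a.e.
  have hUae : U =ᵐ[ν] U' := by
    have hgnull : μ {ω | g ω ≠ G ω} = 0 := hg'
    have hsub : {p : Ω × ℝ | U p ≠ U' p} ⊆ {ω | g ω ≠ G ω} ×ˢ Set.univ := by
      intro p hp
      simp only [Set.mem_setOf_eq] at hp
      by_contra hc
      simp only [Set.mem_prod, Set.mem_setOf_eq, Set.mem_univ, and_true, not_not] at hc
      apply hp
      rw [hU p, hU'_def, hc]
    have hnull : ν ({ω | g ω ≠ G ω} ×ˢ Set.univ) = 0 := by
      rw [hν_def, Measure.prod_prod, hgnull, zero_mul]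
    rw [Filter.eventuallyEq_iff_exists_mem]
    refine ⟨{p | U p = U' p}, ?_, fun p hp => hp⟩
    rw [mem_ae_iff]
    exact measure_mono_null hsub hnull
  -- conclusion part 1
  have hmap' : Measure.map U' ν = m := by
    ext S hS
    rw [Measure.map_apply hU'meas hS]
    have huniv := master hS (MeasurableSet.univ : MeasurableSet[mYd Y] (Set.univ : Set Ω))
    rw [Set.univ_prod_univ, Set.inter_univ, measure_univ, mul_one] at huniv
    rw [huniv, hm_def, Measure.restrict_apply' measurableSet_Icc]
  have part1 : Measure.map U ν = m := by
    rw [Measure.map_congr hUae, hmap']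
  -- conclusion part 2
  have hind2' : IndepFun U' (fun p : Ω × ℝ => Y p.1) ν := by
    rw [indepFun_iff_measure_inter_preimage_eq_mul]
    intro S T hS hT
    have hTset : (fun p : Ω × ℝ => Y p.1) ⁻¹' T = (Y ⁻¹' T) ×ˢ (Set.univ : Set ℝ) := by
      ext p; simp
    have hsY : MeasurableSet[mYd Y] (Y ⁻¹' T) := ⟨T, hT, rfl⟩
    have h1 := master hS hsY
    have h2 := master hS (MeasurableSet.univ : MeasurableSet[mYd Y] (Set.univ : Set Ω))
    rw [Set.univ_prod_univ, Set.inter_univ, measure_univ, mul_one] at h2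
    have h3 : ν ((Y ⁻¹' T) ×ˢ (Set.univ : Set ℝ)) = μ (Y ⁻¹' T) := by
      rw [hν_def, Measure.prod_prod, measure_univ, mul_one]
    rw [hTset, h1, h2, h3]
  have part2 : IndepFun U (fun p : Ω × ℝ => Y p.1) ν :=
    hind2'.congr hUae.symm Filter.EventuallyEq.rfl
  refine ⟨part1, part2, ?_⟩
  -- part 3 : not independent of X
  intro hind
  have hind' : IndepFun U' (fun p : Ω × ℝ => X p.1) ν :=
    hind.congr hUae Filter.EventuallyEq.rfl
  have hGint : Integrable G μ := integrable_condExp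
  have hXset : (fun p : Ω × ℝ => X p.1) ⁻¹' A = (X ⁻¹' A) ×ˢ (Set.univ : Set ℝ) := by
    ext p; simp
  have hkey := (indepFun_iff_measure_inter_preimage_eq_mul.mp hind')
    (Set.Iic (2⁻¹:ℝ)) A measurableSet_Iic hA
  rw [hXset] at hkey
  have hFAG : Measurable[mYd Y] (fun ω => FA (Set.Iic (2⁻¹:ℝ)) (G ω)) :=
    (FA_meas _).comp hGmY
  have hFAb : ∀ ω, ‖FA (Set.Iic (2⁻¹:ℝ)) (G ω)‖ ≤ 1 := fun ω => by
    rw [Real.norm_eq_abs, abs_le]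
    exact ⟨by linarith [(FA_mem (Set.Iic (2⁻¹:ℝ)) (G ω)).1],
      (FA_mem (Set.Iic (2⁻¹:ℝ)) (G ω)).2⟩
  -- compute the joint probability
  have hL : ν (U' ⁻¹' Set.Iic (2⁻¹:ℝ) ∩ (X ⁻¹' A) ×ˢ (Set.univ : Set ℝ))
      = ENNReal.ofReal (∫ ω, min 2⁻¹ (G ω) ∂μ) := by
    rw [step1 measurableSet_Iic (hX hA), step2 _ measurableSet_Iic _ (hX hA)]
    congr 1
    have e0 : ∫ ω in X ⁻¹' A,
        (FA (Set.Iic (2⁻¹:ℝ)) (G ω) * I ω + FB (Set.Iic (2⁻¹:ℝ)) (G ω) * (1 - I ω)) ∂μ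
        = ∫ ω, FA (Set.Iic (2⁻¹:ℝ)) (G ω) * I ω ∂μ := by
      rw [← integral_indicator (hX hA)]
      congr 1
      funext ω
      by_cases h : ω ∈ X ⁻¹' A
      · rw [Set.indicator_of_mem h]
        simp [hI_def, h]
      · rw [Set.indicator_of_notMem h]
        simp [hI_def, h]
    rw [e0]
    calc ∫ ω, FA (Set.Iic (2⁻¹:ℝ)) (G ω) * I ω ∂μ
        = ∫ ω in Set.univ, FA (Set.Iic (2⁻¹:ℝ)) (G ω) * I ω ∂μ := setIntegral_univ.symm
      _ = ∫ ω in Set.univ, FA (Set.Iic (2⁻¹:ℝ)) (G ω) * G ω ∂μ :=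
          pull _ hFAG hFAb (MeasurableSet.univ : MeasurableSet[mYd Y] (Set.univ : Set Ω))
      _ = ∫ ω, FA (Set.Iic (2⁻¹:ℝ)) (G ω) * G ω ∂μ := setIntegral_univ
      _ = ∫ ω, min 2⁻¹ (G ω) ∂μ := by
          refine integral_congr_ae (h01.mono fun ω hω => ?_)
          exact FA_Iic (by norm_num) hω.1
  -- the marginal of U'
  have hU'S : ν (U' ⁻¹' Set.Iic (2⁻¹:ℝ)) = ENNReal.ofReal 2⁻¹ := by
    have h2 := master (S := Set.Iic (2⁻¹:ℝ)) measurableSet_Iic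
      (MeasurableSet.univ : MeasurableSet[mYd Y] (Set.univ : Set Ω))
    rw [Set.univ_prod_univ, Set.inter_univ, measure_univ, mul_one] at h2
    rw [h2, Iic_inter_Icc01, Real.volume_Icc, sub_zero]
  -- the marginal of X ∈ A
  have hXA : ν ((X ⁻¹' A) ×ˢ (Set.univ : Set ℝ)) = ENNReal.ofReal (∫ ω, G ω ∂μ) := by
    have h1 : ∫ ω, I ω ∂μ = (μ (X ⁻¹' A)).toReal := by
      rw [hI_def, integral_indicator_const (1:ℝ) (hX hA), measureReal_def, smul_eq_mul, mul_one]
    have h2 : ∫ ω, I ω ∂μ = ∫ ω, G ω ∂μ := by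
      have := pull (fun _ => (1:ℝ)) measurable_const (fun ω => by norm_num)
        (MeasurableSet.univ : MeasurableSet[mYd Y] (Set.univ : Set Ω))
      simpa using this
    rw [hν_def, Measure.prod_prod, measure_univ, mul_one, ← h2, h1,
      ENNReal.ofReal_toReal (measure_ne_top μ _)]
  rw [hL, hU'S, hXA, ← ENNReal.ofReal_mul (by norm_num : (0:ℝ) ≤ 2⁻¹)] at hkey
  -- extract the real equation
  have hnn1 : 0 ≤ ∫ ω, min 2⁻¹ (G ω) ∂μ :=
    integral_nonneg_of_ae (h01.mono fun ω hω => le_min (by norm_num) hω.1)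
  have hnn2 : (0:ℝ) ≤ 2⁻¹ * ∫ ω, G ω ∂μ :=
    mul_nonneg (by norm_num) (integral_nonneg_of_ae (h01.mono fun ω hω => hω.1))
  have hreal : ∫ ω, min 2⁻¹ (G ω) ∂μ = 2⁻¹ * ∫ ω, G ω ∂μ :=
    (ENNReal.ofReal_eq_ofReal_iff hnn1 hnn2).mp hkey
  -- integrability of the min
  have hmin_int : Integrable (fun ω => min 2⁻¹ (G ω)) μ := by
    have hmin_eq : (fun ω => min 2⁻¹ (G ω))
        = fun ω => (2⁻¹ + G ω - |2⁻¹ - G ω|) / 2 := by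
      funext ω
      rcases le_total (2⁻¹:ℝ) (G ω) with h | h
      · rw [min_eq_left h, abs_of_nonpos (by linarith)]; ring
      · rw [min_eq_right h, abs_of_nonneg (by linarith)]; ring
    rw [hmin_eq]
    exact (((integrable_const (2⁻¹:ℝ)).add hGint).sub
      ((integrable_const (2⁻¹:ℝ)).sub hGint).abs).div_const 2
  -- the defect integrates to zero
  have hsub0 : ∫ ω, (min 2⁻¹ (G ω) - 2⁻¹ * G ω) ∂μ = 0 := by
    rw [integral_sub hmin_int (hGint.const_mul _), integral_const_mul 2⁻¹ G, hreal, sub_self]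
  have hae0 : (fun ω => min 2⁻¹ (G ω) - 2⁻¹ * G ω) =ᵐ[μ] 0 := by
    refine (integral_eq_zero_iff_of_nonneg_ae ?_ (hmin_int.sub (hGint.const_mul _))).mp hsub0
    filter_upwards [h01] with ω hω
    show (0:ℝ) ≤ min 2⁻¹ (G ω) - 2⁻¹ * G ω
    rcases le_total (G ω) 2⁻¹ with h | h
    · rw [min_eq_right h]; linarith [hω.1]
    · rw [min_eq_left h]; linarith [hω.2]
  have hG01 : ∀ᵐ ω ∂μ, G ω = 0 ∨ G ω = 1 := by
    filter_upwards [hae0, h01] with ω h1 h2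
    have h1' : min 2⁻¹ (G ω) - 2⁻¹ * G ω = 0 := h1
    rcases le_total (G ω) 2⁻¹ with h | h
    · left; rw [min_eq_right h] at h1'; linarith
    · right; rw [min_eq_left h] at h1'; linarith
  have hg01 : ∀ᵐ ω ∂μ, g ω = 0 ∨ g ω = 1 := by
    filter_upwards [hG01, hg'] with ω h hgG
    rw [hgG]; exact h
  have hEc : μ {ω | g ω = 0 ∨ g ω = 1}ᶜ = 0 := by
    have := ae_iff.mp hg01
    rw [Set.compl_setOf]
    exact this
  have hge : (1:ℝ≥0∞) ≤ μ {ω | g ω = 0 ∨ g ω = 1} := by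
    calc (1:ℝ≥0∞) = μ Set.univ := measure_univ.symm
      _ = μ ({ω | g ω = 0 ∨ g ω = 1} ∪ {ω | g ω = 0 ∨ g ω = 1}ᶜ) := by
          rw [Set.union_compl_self]
      _ ≤ μ {ω | g ω = 0 ∨ g ω = 1} + μ {ω | g ω = 0 ∨ g ω = 1}ᶜ := measure_union_le _ _
      _ = μ {ω | g ω = 0 ∨ g ω = 1} := by rw [hEc, add_zero]
  exact absurd hnd (not_lt.2 hge)
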